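/- Let 𝒯 be a triangulated category with countable direct sums, 𝔦 a homological ideal compatible with countable direct sums, and (Nₙ, ιₙ^{n+1}) a phantom tower over A ∈ 𝒯 (so each ιₙ^{n+1} ∈ 𝔦). Let N = hocolim Nₙ be the homotopy colimit, i.e. the cone of id − S: ⊕Nₙ → ⊕Nₙ where S is the shift map induced by the ιₙ^{n+1}. Then N is 𝔦-contractible: for any stable homological functor F with ker F = 𝔦, F(N) = 0. -/

import Mathlib

open CategoryTheory Limits Pretriangulated

universe v u v' u'

/-- An ideal in a preadditive category. -/
structure CatIdeal (C : Type u) [Category.{v} C] [Preadditive C] where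
  carrier : ∀ A B : C, AddSubgroup (A ⟶ B)
  comp_mem_left : ∀ {A B X : C} (f : A ⟶ B) (g : B ⟶ X),
    f ∈ carrier A B → f ≫ g ∈ carrier A X
  comp_mem_right : ∀ {A B X : C} (h : X ⟶ A) (f : A ⟶ B),
    f ∈ carrier A B → h ≫ f ∈ carrier X B

/-- `P` is `𝔦`-projective iff every morphism of `𝔦` out of `P` vanishes. -/
def IsProjI {C : Type u} [Category.{v} C] [Preadditive C]
    (I : CatIdeal C) (P : C) : Prop :=
  ∀ (B : C) (g : P ⟶ B), g ∈ I.carrier P B → g = 0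

/-- The homotopy colimit of the phantom tower over `A = N 0` is `𝔦`-contractible:
any stable homological functor `F` with `ker F = 𝔦` kills it. -/
theorem hocolim_phantom_tower_contractible
    (C : Type u) [Category.{v} C] [Preadditive C] [HasZeroObject C] [HasShift C ℤ]
    [∀ n : ℤ, (shiftFunctor C n).Additive] [Pretriangulated C]
    [HasCountableCoproducts C]
    (A : Type u') [Category.{v'} A] [Abelian A]
    (F : C ⥤ A) [F.IsHomological]
    (I : CatIdeal C)
    (hker : ∀ {X Y : C} (f : X ⟶ Y), f ∈ I.carrier X Y ↔ F.map f = 0)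
    (hshift : ∀ {X Y : C} (f : X ⟶ Y) (n : ℤ),
      f ∈ I.carrier X Y → (shiftFunctor C n).map f ∈ I.carrier (X⟦n⟧) (Y⟦n⟧))
    -- `𝔦` is compatible with countable direct sums:
    (hsum : ∀ (ι : Type) [Countable ι] (X : ι → C) (B : C) (f : (∐ X) ⟶ B),
      ((∀ i, Sigma.ι X i ≫ f ∈ I.carrier (X i) B) ↔ f ∈ I.carrier (∐ X) B))
    -- a phantom tower over `A = N 0`:
    (N P : ℕ → C)
    (π : ∀ n, P n ⟶ N n)
    (ι : ∀ n, N n ⟶ N (n + 1))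
    (ε : ∀ n, N (n + 1) ⟶ (P n)⟦(1 : ℤ)⟧)
    (htri : ∀ n, Triangle.mk (π n) (ι n) (ε n) ∈ (distTriang C))
    (hP : ∀ n, IsProjI I (P n))
    (hι : ∀ n, ι n ∈ I.carrier (N n) (N (n + 1)))
    -- the homotopy colimit `Nc` of the tower, as the cone of `id - S`:
    (Nc : C) (toNc : (∐ N) ⟶ Nc) (δ : Nc ⟶ (∐ N)⟦(1 : ℤ)⟧)
    (htriNc : Triangle.mk
      (𝟙 (∐ N) - Sigma.desc (fun n => ι n ≫ Sigma.ι N (n + 1))) toNc δ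
        ∈ (distTriang C)) :
    IsZero (F.obj Nc) := by
  have : F.Additive := inferInstance
  set S : (∐ N) ⟶ (∐ N) := Sigma.desc (fun n => ι n ≫ Sigma.ι N (n + 1)) with hS
  have hSmem : S ∈ I.carrier (∐ N) (∐ N) := by
    rw [← hsum]
    intro i
    rw [hS, Sigma.ι_desc]
    exact I.comp_mem_left _ _ (hι i)
  have hFS : F.map S = 0 := (hker S).1 hSmem
  have hF1 : F.map (𝟙 (∐ N) - S) = 𝟙 _ := by
    rw [F.map_sub, hFS, F.map_id, sub_zero]
  have hFtoNc : F.map toNc = 0 := by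
    have h0 : (𝟙 (∐ N) - S) ≫ toNc = 0 := comp_distTriang_mor_zero₁₂ _ htriNc
    have := congrArg F.map h0
    rw [F.map_comp, hF1, Category.id_comp, F.map_zero] at this
    exact this
  have hFδ : F.map δ = 0 := by
    have h0 : δ ≫ (𝟙 (∐ N) - S)⟦(1 : ℤ)⟧' = 0 := comp_distTriang_mor_zero₃₁ _ htriNc
    have hshiftmap : F.map ((𝟙 (∐ N) - S)⟦(1 : ℤ)⟧') = 𝟙 _ := by
      rw [Functor.map_sub, (shiftFunctor C (1 : ℤ)).map_id, F.map_sub, F.map_id]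
      have : ((shiftFunctor C (1 : ℤ)).map S) ∈ I.carrier _ _ := hshift S 1 hSmem
      rw [(hker _).1 this, sub_zero]
    have := congrArg F.map h0
    rw [F.map_comp, hshiftmap, Category.comp_id, F.map_zero] at this
    exact this
  have hexact := F.map_distinguished_exact _ (rot_of_distTriang _ htriNc)
  exact hexact.isZero_of_both_zeros hFtoNc hFδ
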